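/- Fix integers N ≥ 3 and k with 1 ≤ k ≤ N. Then for all complex numbers α and β: ‖Π̂(α(ψ₁ + ψ₂) + β Σ_{x=3}^{N} ψ_x)‖² ≤ (2(k−1)/(N−1)) · ‖α(ψ₁ + ψ₂) + β Σ_{x=3}^{N} ψ_x‖². -/

import Mathlib

/-- The set `D` of strings `z ∈ {0,1}^N` of Hamming weight `k`. -/
abbrev DSet (N k : ℕ) : Type :=
  {z : Fin N → Bool // (Finset.univ.filter fun x => z x = true).card = k}

/-- The unit vector `ψ_x ∈ ℂ^D` with `ψ_x(z) = C(N−1,k−1)^{−1/2}` if `z_x = 1` and `0` else. -/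
noncomputable def psi (N k : ℕ) (x : Fin N) : EuclideanSpace ℂ (DSet N k) :=
  WithLp.toLp 2 (fun z : DSet N k => if z.val x = true then ((Real.sqrt ((N - 1).choose (k - 1)) : ℝ)⁻¹ : ℂ) else 0)

/-- The orthogonal projection `Π̂` of `ℂ^D` onto the span of the standard basis vectors `e_z`
with `z₁ = z₂ = 1`. -/
noncomputable def projHat (N k : ℕ) (hN : 2 ≤ N)
    (v : EuclideanSpace ℂ (DSet N k)) : EuclideanSpace ℂ (DSet N k) :=
  WithLp.toLp 2 (fun z : DSet N k => if z.val ⟨0, by omega⟩ = true ∧ z.val ⟨1, by omega⟩ = true then v z else 0)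

section helper12
open Finset

-- number of ones among first two coords
def Acard (N k : ℕ) (z : DSet N k) : ℕ :=
  (Finset.univ.filter fun x : Fin N => (x : ℕ) < 2 ∧ z.val x = true).card

lemma Tset_eq (N : ℕ) (hN : 2 ≤ N) :
    (Finset.univ.filter fun x : Fin N => (x : ℕ) < 2)
      = {(⟨0, by omega⟩ : Fin N), ⟨1, by omega⟩} := by
  ext x
  simp only [mem_filter, mem_univ, true_and, mem_insert, mem_singleton, Fin.ext_iff]
  omega

lemma sum_psi_apply (N k : ℕ) (s : Finset (Fin N)) (z : DSet N k) :
    (∑ x ∈ s, psi N k x) z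
      = ((s.filter fun x => z.val x = true).card : ℂ)
          * ((Real.sqrt ((N - 1).choose (k - 1)) : ℝ)⁻¹ : ℂ) := by
  have : (∑ x ∈ s, psi N k x) z = ∑ x ∈ s, psi N k x z := by
    rw [WithLp.ofLp_sum]; exact Finset.sum_apply z s _
  rw [this]
  simp only [psi, PiLp.toLp_apply]
  rw [← Finset.sum_filter, Finset.sum_const, nsmul_eq_mul]

lemma Acard_le_two (N k : ℕ) (hN : 2 ≤ N) (z : DSet N k) : Acard N k z ≤ 2 := by
  unfold Acard
  calc (Finset.univ.filter fun x : Fin N => (x : ℕ) < 2 ∧ z.val x = true).card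
      ≤ (Finset.univ.filter fun x : Fin N => (x : ℕ) < 2).card :=
        Finset.card_le_card (fun x hx => by
          simp only [mem_filter] at hx ⊢; exact ⟨hx.1, hx.2.1⟩)
    _ = 2 := by
        rw [Tset_eq N hN, card_insert_of_notMem (by simp [Fin.ext_iff]), card_singleton]

lemma Acard_le_k (N k : ℕ) (z : DSet N k) : Acard N k z ≤ k := by
  calc Acard N k z ≤ (Finset.univ.filter fun x : Fin N => z.val x = true).card :=
        Finset.card_le_card (fun x hx => by
          simp only [Acard, mem_filter] at hx ⊢; exact ⟨hx.1, hx.2.2⟩)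
    _ = k := z.property

lemma Acard_eq_pair (N k : ℕ) (hN : 2 ≤ N) (z : DSet N k) (h0 : 0 < N) (h1 : 1 < N) :
    Acard N k z
      = (({(⟨0, h0⟩ : Fin N), ⟨1, h1⟩} : Finset (Fin N)).filter (fun x => z.val x = true)).card := by
  unfold Acard
  congr 1
  rw [← Tset_eq N hN, Finset.filter_filter]

lemma pair_sum_apply (N k : ℕ) (hN : 2 ≤ N) (z : DSet N k) (h0 : 0 < N) (h1 : 1 < N) :
    (psi N k ⟨0, h0⟩ + psi N k ⟨1, h1⟩) z
      = ((Acard N k z : ℕ) : ℂ) * ((Real.sqrt ((N - 1).choose (k - 1)) : ℝ)⁻¹ : ℂ) := by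
  have h := sum_psi_apply N k (Finset.univ.filter fun x : Fin N => (x : ℕ) < 2) z
  rw [Tset_eq N hN] at h
  rw [Finset.sum_pair (by simp [Fin.ext_iff])] at h
  refine Eq.trans ?_ (h.trans ?_)
  · rfl
  · rw [← Acard_eq_pair N k hN z h0 h1]

lemma Acard_eq_ite (N k : ℕ) (hN : 2 ≤ N) (z : DSet N k) (h0 : 0 < N) (h1 : 1 < N) :
    Acard N k z
      = (if z.val ⟨0, h0⟩ = true then 1 else 0) + (if z.val ⟨1, h1⟩ = true then 1 else 0) := by
  rw [Acard_eq_pair N k hN z h0 h1]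
  rw [Finset.filter_insert, Finset.filter_singleton]
  have hne : (⟨0, h0⟩ : Fin N) ≠ ⟨1, h1⟩ := by simp [Fin.ext_iff]
  by_cases hz0 : z.val ⟨0, h0⟩ = true <;> by_cases hz1 : z.val ⟨1, h1⟩ = true <;>
    simp [hz0, hz1, hne]

lemma Acard_eq_two_iff (N k : ℕ) (hN : 2 ≤ N) (z : DSet N k) (h0 : 0 < N) (h1 : 1 < N) :
    Acard N k z = 2 ↔ (z.val ⟨0, h0⟩ = true ∧ z.val ⟨1, h1⟩ = true) := by
  rw [Acard_eq_ite N k hN z h0 h1]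
  by_cases hz0 : z.val ⟨0, h0⟩ = true <;> by_cases hz1 : z.val ⟨1, h1⟩ = true <;>
    simp [hz0, hz1]

lemma Acard_add_Bcard (N k : ℕ) (z : DSet N k) :
    Acard N k z +
      ((Finset.univ.filter fun x : Fin N => 2 ≤ (x : ℕ)).filter fun x => z.val x = true).card
      = k := by
  have h := Finset.card_filter_add_card_filter_not
      (s := Finset.univ.filter fun x : Fin N => z.val x = true) (p := fun x => ((x : ℕ) < 2))
  rw [z.property] at h
  have e1 : Acard N k z
      = ((Finset.univ.filter fun x : Fin N => z.val x = true).filter fun x : Fin N => (x : ℕ) < 2).card := by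
    unfold Acard
    rw [Finset.filter_filter]
    congr 1
    apply Finset.filter_congr
    intro x _
    tauto
  have e2 : ((Finset.univ.filter fun x : Fin N => 2 ≤ (x : ℕ)).filter fun x => z.val x = true).card
      = ((Finset.univ.filter fun x : Fin N => z.val x = true).filter fun a : Fin N => ¬ (a : ℕ) < 2).card := by
    rw [Finset.filter_filter, Finset.filter_filter]
    congr 1
    apply Finset.filter_congr
    intro x _
    constructor
    · rintro ⟨h2, hz⟩; exact ⟨hz, by omega⟩
    · rintro ⟨hz, h2⟩; exact ⟨by omega, hz⟩
  omega

lemma v_apply (N k : ℕ) (hN : 2 ≤ N) (α β : ℂ) (z : DSet N k) (h0 : 0 < N) (h1 : 1 < N) :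
    (α • (psi N k ⟨0, h0⟩ + psi N k ⟨1, h1⟩) +
        β • ∑ x ∈ Finset.univ.filter (fun x : Fin N => 2 ≤ (x : ℕ)), psi N k x) z
      = (α * (Acard N k z : ℂ) + β * ((k - Acard N k z : ℕ) : ℂ))
          * ((Real.sqrt ((N - 1).choose (k - 1)) : ℝ)⁻¹ : ℂ) := by
  have hB : ((Finset.univ.filter fun x : Fin N => 2 ≤ (x : ℕ)).filter
      fun x => z.val x = true).card = k - Acard N k z := by
    have := Acard_add_Bcard N k z; omega
  rw [PiLp.add_apply, PiLp.smul_apply, PiLp.smul_apply,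
    pair_sum_apply N k hN z h0 h1, sum_psi_apply N k _ z, hB]
  simp only [smul_eq_mul]
  ring

lemma filter_decide_mem (N : ℕ) (u : Finset (Fin N)) :
    (Finset.univ.filter fun x : Fin N => decide (x ∈ u) = true) = u := by
  ext x; simp

lemma count_fiber (N k a : ℕ) (hN : 2 ≤ N) (hak : a ≤ k) (hkN : k ≤ N) :
    (Finset.univ.filter fun z : DSet N k => Acard N k z = a).card
      = Nat.choose 2 a * Nat.choose (N - 2) (k - a) := by
  classical
  set T : Finset (Fin N) := Finset.univ.filter fun x : Fin N => (x : ℕ) < 2 with hT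
  have hTmem : ∀ x : Fin N, x ∈ T ↔ (x : ℕ) < 2 := by
    intro x; rw [hT]; simp
  have hTcard : T.card = 2 := by
    rw [hT, Tset_eq N hN, card_insert_of_notMem (by simp [Fin.ext_iff]), card_singleton]
  have hTc : Tᶜ.card = N - 2 := by
    rw [Finset.card_compl, hTcard, Fintype.card_fin]
  have hAcard : ∀ z : DSet N k,
      ((Finset.univ.filter fun x => z.val x = true) ∩ T).card = Acard N k z := by
    intro z
    unfold Acard
    congr 1
    ext x
    rw [Finset.mem_inter, hTmem]
    simp only [Finset.mem_filter, Finset.mem_univ, true_and]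
    tauto
  rw [← hTc, ← hTcard, ← Finset.card_powersetCard, ← Finset.card_powersetCard,
    ← Finset.card_product]
  apply Finset.card_bij'
    (i := fun z _ => ((Finset.univ.filter fun x => z.val x = true) ∩ T,
                      (Finset.univ.filter fun x => z.val x = true) \ T))
    (j := fun pq hpq => (⟨fun x => decide (x ∈ pq.1 ∪ pq.2), by
      rw [Finset.mem_product, Finset.mem_powersetCard, Finset.mem_powersetCard] at hpq
      obtain ⟨⟨hp1, hc1⟩, hp2, hc2⟩ := hpq
      have hdisj : Disjoint pq.1 pq.2 := Finset.disjoint_left.mpr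
        (fun {x} hx1 hx2 => (Finset.mem_compl.mp (hp2 hx2)) (hp1 hx1))
      rw [filter_decide_mem, Finset.card_union_of_disjoint hdisj, hc1, hc2]
      omega⟩ : DSet N k))
  case hi =>
    intro z hz
    rw [Finset.mem_filter] at hz
    rw [Finset.mem_product, Finset.mem_powersetCard, Finset.mem_powersetCard]
    have hcard := Finset.card_inter_add_card_sdiff
      (Finset.univ.filter fun x => z.val x = true) T
    rw [z.property, hAcard z, hz.2] at hcard
    refine ⟨⟨Finset.inter_subset_right, by rw [hAcard z, hz.2]⟩, ?_, by
      show ((Finset.univ.filter fun x => z.val x = true) \ T).card = k - a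
      omega⟩
    intro x hx
    rw [Finset.mem_compl]
    exact (Finset.mem_sdiff.mp hx).2
  case hj =>
    intro pq hpq
    rw [Finset.mem_product, Finset.mem_powersetCard, Finset.mem_powersetCard] at hpq
    obtain ⟨⟨hp1, hc1⟩, hp2, hc2⟩ := hpq
    rw [Finset.mem_filter]
    refine ⟨Finset.mem_univ _, ?_⟩
    show (Finset.univ.filter fun x : Fin N => (x : ℕ) < 2 ∧
        (decide (x ∈ pq.1 ∪ pq.2) : Bool) = true).card = a
    have : (Finset.univ.filter fun x : Fin N => (x : ℕ) < 2 ∧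
        (decide (x ∈ pq.1 ∪ pq.2) : Bool) = true) = pq.1 := by
      ext x
      simp only [Finset.mem_filter, Finset.mem_univ, true_and, decide_eq_true_eq,
        Finset.mem_union]
      constructor
      · rintro ⟨hlt, hmem | hmem⟩
        · exact hmem
        · exact absurd hlt (by simpa [hTmem] using Finset.mem_compl.mp (hp2 hmem))
      · intro hmem
        exact ⟨(hTmem x).mp (hp1 hmem), Or.inl hmem⟩
    rw [this, hc1]
  case left_inv =>
    intro z hz
    apply Subtype.ext
    funext x
    have hS : ((Finset.univ.filter fun x => z.val x = true) ∩ T)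
        ∪ ((Finset.univ.filter fun x => z.val x = true) \ T)
        = Finset.univ.filter fun x => z.val x = true := by
      rw [Finset.union_comm, Finset.sdiff_union_inter]
    show (decide (x ∈ _ ∪ _) : Bool) = z.val x
    rw [hS]
    by_cases hzx : z.val x = true <;> simp [hzx]
  case right_inv =>
    intro pq hpq
    rw [Finset.mem_product, Finset.mem_powersetCard, Finset.mem_powersetCard] at hpq
    obtain ⟨⟨hp1, hc1⟩, hp2, hc2⟩ := hpq
    have hq_disj_T : Disjoint pq.2 T := Finset.disjoint_left.mpr
      (fun {x} hx2 hxT => (Finset.mem_compl.mp (hp2 hx2)) hxT)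
    have hset : (Finset.univ.filter fun x : Fin N => (decide (x ∈ pq.1 ∪ pq.2) : Bool) = true)
        = pq.1 ∪ pq.2 := filter_decide_mem N _
    have h1 : (pq.1 ∪ pq.2) ∩ T = pq.1 := by
      rw [Finset.union_inter_distrib_right, Finset.inter_eq_left.mpr hp1,
        Finset.disjoint_iff_inter_eq_empty.mp hq_disj_T, Finset.union_empty]
    have h2 : (pq.1 ∪ pq.2) \ T = pq.2 := by
      rw [Finset.union_sdiff_distrib, Finset.sdiff_eq_empty_iff_subset.mpr hp1,
        Finset.empty_union, Finset.sdiff_eq_self_of_disjoint hq_disj_T]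
    ext <;> simp only [hset, h1, h2]

lemma main_scalar (N k : ℕ) (hk2 : 2 ≤ k) (h2k : 2 * k ≤ N) (P Q X : ℝ)
    (hP : 0 ≤ P) (hQ : 0 ≤ Q) (hX0 : 0 ≤ X) (hX : X ≤ (2 * P + Q) ^ 2) :
    ((N - 2).choose (k - 2) : ℝ) * X
      ≤ 2 * ((k : ℝ) - 1) / ((N : ℝ) - 1) *
        (((N - 2).choose k : ℝ) * Q ^ 2 + 2 * ((N - 2).choose (k - 1) : ℝ) * P ^ 2
          + ((N - 2).choose (k - 2) : ℝ) * X) := by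
  have hkN : k ≤ N := by omega
  have hK2 : (2 : ℝ) ≤ (k : ℝ) := by exact_mod_cast hk2
  have hM : 2 * (k : ℝ) ≤ (N : ℝ) := by exact_mod_cast h2k
  set K := (k : ℝ) with hK
  set M := (N : ℝ) with hMdef
  set c2 := ((N - 2).choose (k - 2) : ℝ) with hc2
  set c1 := ((N - 2).choose (k - 1) : ℝ) with hc1
  set c0 := ((N - 2).choose k : ℝ) with hc0
  have hc2pos : 0 < c2 := by
    rw [hc2]; exact_mod_cast Nat.choose_pos (by omega : k - 2 ≤ N - 2)
  have hc1nn : 0 ≤ c1 := by rw [hc1]; positivity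
  have hc0nn : 0 ≤ c0 := by rw [hc0]; positivity
  -- choose identities
  have i1 : (K - 1) * c1 = (M - K) * c2 := by
    have h := Nat.choose_succ_right_eq (N - 2) (k - 2)
    rw [show k - 2 + 1 = k - 1 by omega, show N - 2 - (k - 2) = N - k by omega] at h
    have h' := congrArg (Nat.cast : ℕ → ℝ) h
    push_cast [Nat.cast_sub (show 1 ≤ k by omega), Nat.cast_sub hkN] at h'
    rw [hK, hMdef, hc1, hc2]
    linarith [h']
  have i2 : K * c0 = (M - K - 1) * c1 := by
    have h := Nat.choose_succ_right_eq (N - 2) (k - 1)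
    rw [show k - 1 + 1 = k by omega, show N - 2 - (k - 1) = N - (k + 1) by omega] at h
    have h' := congrArg (Nat.cast : ℕ → ℝ) h
    push_cast [Nat.cast_sub (show k + 1 ≤ N by omega)] at h'
    rw [hK, hMdef, hc1, hc0]
    push_cast
    linarith [h']
  have e0 : K * (K - 1) * c0 = (M - K - 1) * (M - K) * c2 := by
    linear_combination (K - 1) * i2 + (M - K - 1) * i1
  have hM1 : (0 : ℝ) < M - 1 := by nlinarith
  rw [div_mul_eq_mul_div, le_div_iff₀ hM1]
  -- pure polynomial inequality H
  have H : K * (K - 1) * (M - 1) * X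
      ≤ 2 * (K - 1) * (M - K - 1) * (M - K) * Q ^ 2 + 4 * K * (K - 1) * (M - K) * P ^ 2
        + 2 * K * (K - 1) ^ 2 * X := by
    have hfac : (0 : ℝ) ≤ K * (K - 1) * (M - 2 * K + 1) := by
      have a1 : (0:ℝ) ≤ K := by linarith
      have a2 : (0:ℝ) ≤ K - 1 := by linarith
      have a3 : (0:ℝ) ≤ M - 2 * K + 1 := by linarith
      positivity
    have step1 : K * (K - 1) * (M - 2 * K + 1) * X
        ≤ K * (K - 1) * (M - 2 * K + 1) * (2 * P + Q) ^ 2 :=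
      mul_le_mul_of_nonneg_left hX hfac
    have hs : (0 : ℝ) ≤ K * (2 * (K - 1) * P - (M - 2 * K + 1) * Q) ^ 2 := by positivity
    have hq2 : (0 : ℝ) ≤ (K - 2) * (M - 1) * (M - K) * Q ^ 2 := by
      have : (0:ℝ) ≤ K - 2 := by linarith
      have h2 : (0:ℝ) ≤ M - K := by linarith
      positivity
    have id : (K - 1) * (2 * (M - K - 1) * (M - K) * Q ^ 2 + 4 * K * (M - K) * P ^ 2)
        - (K - 1) * (K * (M - 2 * K + 1) * (2 * P + Q) ^ 2)
        = K * (2 * (K - 1) * P - (M - 2 * K + 1) * Q) ^ 2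
          + (K - 2) * (M - 1) * (M - K) * Q ^ 2 := by ring
    linarith [step1, hs, hq2]
  -- transfer via the choose identities
  have hKK : (0 : ℝ) < K * (K - 1) := by nlinarith
  have hmul : K * (K - 1) * (c2 * X * (M - 1))
      ≤ K * (K - 1) * (2 * (K - 1) * (c0 * Q ^ 2 + 2 * c1 * P ^ 2 + c2 * X)) := by
    have expand : K * (K - 1) * (2 * (K - 1) * (c0 * Q ^ 2 + 2 * c1 * P ^ 2 + c2 * X))
        = c2 * (2 * (K - 1) * (M - K - 1) * (M - K) * Q ^ 2
            + 4 * K * (K - 1) * (M - K) * P ^ 2 + 2 * K * (K - 1) ^ 2 * X) := by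
      linear_combination (2 * (K - 1) * Q ^ 2) * e0 + (4 * K * (K - 1) * P ^ 2) * i1
    rw [expand, show K * (K - 1) * (c2 * X * (M - 1)) = c2 * (K * (K - 1) * (M - 1) * X) by ring]
    exact mul_le_mul_of_nonneg_left H hc2pos.le
  exact le_of_mul_le_mul_left hmul hKK

set_option maxHeartbeats 1000000 in
lemma main_lemma (N k : ℕ) (hN : 3 ≤ N) (hk1 : 1 ≤ k) (hkN : k ≤ N)
    (α β : ℂ) (h0 : 0 < N) (h1 : 1 < N) (h2 : 2 ≤ N) :
    ‖projHat N k h2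
        (α • (psi N k ⟨0, h0⟩ + psi N k ⟨1, h1⟩) +
          β • ∑ x ∈ Finset.univ.filter (fun x : Fin N => 2 ≤ (x : ℕ)), psi N k x)‖ ^ 2
      ≤ 2 * ((k : ℝ) - 1) / ((N : ℝ) - 1) *
          ‖α • (psi N k ⟨0, h0⟩ + psi N k ⟨1, h1⟩) +
            β • ∑ x ∈ Finset.univ.filter (fun x : Fin N => 2 ≤ (x : ℕ)), psi N k x‖ ^ 2 := by
  classical
  set c : ℝ := Real.sqrt ((N - 1).choose (k - 1)) with hcdef
  have hcpos : 0 < c := Real.sqrt_pos.mpr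
    (Nat.cast_pos.mpr (Nat.choose_pos (by omega : k - 1 ≤ N - 1)))
  set v : EuclideanSpace ℂ (DSet N k) :=
    α • (psi N k ⟨0, h0⟩ + psi N k ⟨1, h1⟩) +
      β • ∑ x ∈ Finset.univ.filter (fun x : Fin N => 2 ≤ (x : ℕ)), psi N k x with hvdef
  have hval : ∀ z : DSet N k,
      v z = (α * (Acard N k z : ℂ) + β * ((k - Acard N k z : ℕ) : ℂ)) * ((c⁻¹ : ℝ) : ℂ) :=
    fun z => by rw [hcdef, Complex.ofReal_inv]; exact v_apply N k h2 α β z h0 h1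
  set g : ℕ → ℝ := fun a => ‖α * (a : ℂ) + β * ((k - a : ℕ) : ℂ)‖ ^ 2 * (c⁻¹) ^ 2 with hgdef
  have hg_nonneg : ∀ a, 0 ≤ g a := fun a => by rw [hgdef]; positivity
  have hnormz : ∀ z : DSet N k, ‖v z‖ ^ 2 = g (Acard N k z) := by
    intro z
    rw [hval z, norm_mul, mul_pow, hgdef]
    congr 2
    rw [Complex.norm_real, Real.norm_eq_abs, abs_of_nonneg (inv_nonneg.mpr hcpos.le)]
  have hsum : ∀ w : EuclideanSpace ℂ (DSet N k), ‖w‖ ^ 2 = ∑ z : DSet N k, ‖w z‖ ^ 2 := by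
    intro w
    rw [EuclideanSpace.norm_eq, Real.sq_sqrt (Finset.sum_nonneg fun z _ => by positivity)]
  set n : ℕ → ℕ := fun a => (Finset.univ.filter fun z : DSet N k => Acard N k z = a).card
    with hndef
  have fiber_sum : ∀ a : ℕ,
      ∑ z ∈ Finset.univ.filter (fun z : DSet N k => Acard N k z = a), ‖v z‖ ^ 2
        = (n a : ℝ) * g a := by
    intro a
    rw [Finset.sum_congr rfl (fun z hz => by
      rw [hnormz z, (Finset.mem_filter.mp hz).2]), Finset.sum_const, nsmul_eq_mul]
  have hnv : ‖v‖ ^ 2 = ∑ a ∈ Finset.range 3, (n a : ℝ) * g a := by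
    have hfib := Finset.sum_fiberwise_of_maps_to (s := (Finset.univ : Finset (DSet N k)))
      (t := Finset.range 3) (g := Acard N k)
      (fun z _ => Finset.mem_range.mpr (by have := Acard_le_two N k h2 z; omega))
      (fun z => ‖v z‖ ^ 2)
    rw [hsum v, ← hfib]
    exact Finset.sum_congr rfl fun a _ => fiber_sum a
  have hproj : ‖projHat N k h2 v‖ ^ 2 = (n 2 : ℝ) * g 2 := by
    rw [hsum]
    have hcoord : ∀ z : DSet N k,
        ‖projHat N k h2 v z‖ ^ 2 = if Acard N k z = 2 then ‖v z‖ ^ 2 else 0 := by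
      intro z
      show ‖(if z.val ⟨0, by omega⟩ = true ∧ z.val ⟨1, by omega⟩ = true then v z else 0)‖ ^ 2 = _
      by_cases hA : Acard N k z = 2
      · rw [if_pos ((Acard_eq_two_iff N k h2 z h0 h1).mp hA), if_pos hA]
      · rw [if_neg (fun hcon => hA ((Acard_eq_two_iff N k h2 z h0 h1).mpr hcon)),
          if_neg hA, norm_zero]
        norm_num
    rw [Finset.sum_congr rfl fun z _ => hcoord z, ← Finset.sum_filter, fiber_sum 2]
  rw [hproj, hnv, Finset.sum_range_succ, Finset.sum_range_succ, Finset.sum_range_one]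
  by_cases hk2 : k < 2
  · -- k = 1
    have hn2 : n 2 = 0 := by
      show (Finset.univ.filter fun z : DSet N k => Acard N k z = 2).card = 0
      rw [Finset.card_eq_zero, Finset.filter_eq_empty_iff]
      intro z _ hcon
      have h := Acard_le_k N k z
      omega
    have hkk : k = 1 := by omega
    rw [hn2, hkk]
    norm_num
  by_cases hNk : N < 2 * k
  · -- 2k ≥ N + 1 : the projection bound is trivial
    have hlam : 1 ≤ 2 * ((k : ℝ) - 1) / ((N : ℝ) - 1) := by
      rw [le_div_iff₀ (by
        have : (3:ℝ) ≤ (N:ℝ) := by exact_mod_cast hN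
        linarith)]
      have hk' : (k:ℝ) ≥ ((N:ℝ) + 1)/2 := by
        have : (N:ℝ) + 1 ≤ 2 * (k:ℝ) := by exact_mod_cast Nat.succ_le_of_lt hNk
        linarith
      linarith
    have hsumnn : (0:ℝ) ≤ (n 0 : ℝ) * g 0 + (n 1 : ℝ) * g 1 := by
      have := hg_nonneg 0; have := hg_nonneg 1; positivity
    have h22 : (0:ℝ) ≤ (n 2 : ℝ) * g 2 := by have := hg_nonneg 2; positivity
    calc (n 2 : ℝ) * g 2 ≤ (n 0 : ℝ) * g 0 + (n 1 : ℝ) * g 1 + (n 2 : ℝ) * g 2 := by linarith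
      _ ≤ 2 * ((k : ℝ) - 1) / ((N : ℝ) - 1) *
            ((n 0 : ℝ) * g 0 + (n 1 : ℝ) * g 1 + (n 2 : ℝ) * g 2) :=
          le_mul_of_one_le_left (by linarith) hlam
  · -- main case : 2 ≤ k, 2k ≤ N
    have hk2' : 2 ≤ k := by omega
    have h2k : 2 * k ≤ N := by omega
    have hn0 : (n 0 : ℝ) = ((N - 2).choose k : ℝ) := by
      show (((Finset.univ.filter fun z : DSet N k => Acard N k z = 0).card : ℕ) : ℝ) = _
      rw [count_fiber N k 0 h2 (by omega) hkN]; norm_num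
    have hn1 : (n 1 : ℝ) = 2 * ((N - 2).choose (k - 1) : ℝ) := by
      show (((Finset.univ.filter fun z : DSet N k => Acard N k z = 1).card : ℕ) : ℝ) = _
      rw [count_fiber N k 1 h2 (by omega) hkN]
      push_cast
      norm_num
    have hn2 : (n 2 : ℝ) = ((N - 2).choose (k - 2) : ℝ) := by
      show (((Finset.univ.filter fun z : DSet N k => Acard N k z = 2).card : ℕ) : ℝ) = _
      rw [count_fiber N k 2 h2 (by omega) hkN]; norm_num
    have hg0 : g 0 = ‖β * (k : ℂ)‖ ^ 2 * (c⁻¹) ^ 2 := by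
      show ‖α * ((0:ℕ) : ℂ) + β * ((k - 0 : ℕ) : ℂ)‖ ^ 2 * (c⁻¹) ^ 2 = _
      norm_num
    have hg1 : g 1 = ‖α + β * ((k : ℂ) - 1)‖ ^ 2 * (c⁻¹) ^ 2 := by
      show ‖α * ((1:ℕ) : ℂ) + β * ((k - 1 : ℕ) : ℂ)‖ ^ 2 * (c⁻¹) ^ 2 = _
      rw [Nat.cast_sub hk1]
      norm_num
    have hg2eq : g 2 = ‖α * 2 + β * ((k - 2 : ℕ) : ℂ)‖ ^ 2 * (c⁻¹) ^ 2 := by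
      show ‖α * ((2:ℕ) : ℂ) + β * ((k - 2 : ℕ) : ℂ)‖ ^ 2 * (c⁻¹) ^ 2 = _
      norm_num
    have hXle : ‖α * 2 + β * ((k - 2 : ℕ) : ℂ)‖ ^ 2
        ≤ (2 * ‖α + β * ((k : ℂ) - 1)‖ + ‖β * (k : ℂ)‖) ^ 2 := by
      have harg : α * 2 + β * ((k - 2 : ℕ) : ℂ)
          = 2 * (α + β * ((k : ℂ) - 1)) - β * (k : ℂ) := by
        rw [Nat.cast_sub hk2']
        push_cast
        ring
      have hb : ‖α * 2 + β * ((k - 2 : ℕ) : ℂ)‖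
          ≤ 2 * ‖α + β * ((k : ℂ) - 1)‖ + ‖β * (k : ℂ)‖ := by
        rw [harg]
        refine (norm_sub_le _ _).trans ?_
        rw [norm_mul]
        norm_num
      exact pow_le_pow_left₀ (norm_nonneg _) hb 2
    have hms := main_scalar N k hk2' h2k ‖α + β * ((k : ℂ) - 1)‖ ‖β * (k : ℂ)‖
      (‖α * 2 + β * ((k - 2 : ℕ) : ℂ)‖ ^ 2)
      (norm_nonneg _) (norm_nonneg _) (by positivity) hXle
    have hfinal := mul_le_mul_of_nonneg_right hms (by positivity : (0:ℝ) ≤ (c⁻¹) ^ 2)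
    clear_value v n g c
    rw [hn0]
    rw [hn1]
    rw [hn2]
    rw [hg0]
    rw [hg1]
    rw [hg2eq]
    nlinarith [hfinal]

end helper12

theorem stmt12 (N k : ℕ) (hN : 3 ≤ N) (hk1 : 1 ≤ k) (hkN : k ≤ N) (α β : ℂ) :
    ‖projHat N k (by omega)
        (α • (psi N k ⟨0, by omega⟩ + psi N k ⟨1, by omega⟩) +
          β • ∑ x ∈ Finset.univ.filter (fun x : Fin N => 2 ≤ (x : ℕ)), psi N k x)‖ ^ 2
      ≤ 2 * ((k : ℝ) - 1) / ((N : ℝ) - 1) *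
          ‖α • (psi N k ⟨0, by omega⟩ + psi N k ⟨1, by omega⟩) +
            β • ∑ x ∈ Finset.univ.filter (fun x : Fin N => 2 ≤ (x : ℕ)), psi N k x‖ ^ 2 :=
  main_lemma N k hN hk1 hkN α β (by omega) (by omega) (by omega)
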